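/- arXiv:2601.14182 — 4 statements merged into one kernel-verified Lean document; each statement's English description precedes it below -/
import Mathlib

section
/- Let A be a self-adjoint N×N complex matrix, I₁ = [E₁−η, E₁+η], I₂ = [E₂−η, E₂+η] intervals with η > 0, and z_j = E_j + iη. Then L_{I₁I₂}(A,K) ≤ (4η²/|Λ_{I₁}|) Tr(K Im R^{z₁} K* Im R^{z₂}), where R^z = (A − z·Id)^{−1} and Im R^z = (R^z − (R^z)*)/(2i). -/
open scoped ComplexConjugate Classical Matrix

/-- Standard inner product on `ℂ^N` (conjugate-linear in the first argument). -/
noncomputable def dotc {N : ℕ} (u v : Fin N → ℂ) : ℂ := ∑ i, conj (u i) * v i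

lemma key_scalar (x η : ℝ) (hη : 0 < η) :
    (2 * Complex.I)⁻¹ * ((((x:ℂ) - (η:ℂ) * Complex.I))⁻¹ - conj ((((x:ℂ) - (η:ℂ) * Complex.I))⁻¹))
      = ((η / (x^2 + η^2) : ℝ) : ℂ) := by
  have h1 : ((x:ℂ) - (η:ℂ)*Complex.I) ≠ 0 := by
    intro h
    have := congrArg Complex.im h
    simp at this
    exact absurd this (ne_of_gt hη)
  have h2 : ((x:ℂ) + (η:ℂ)*Complex.I) ≠ 0 := by
    intro h
    have := congrArg Complex.im h
    simp at this
    exact absurd this (ne_of_gt hη)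
  have hd : (x^2 + η^2 : ℝ) ≠ 0 := by positivity
  have hdc : ((x:ℂ)^2 + (η:ℂ)^2) ≠ 0 := by
    have := Complex.ofReal_ne_zero.mpr hd
    push_cast at this
    exact this
  have hconj : conj ((x:ℂ) - (η:ℂ)*Complex.I) = (x:ℂ) + (η:ℂ)*Complex.I := by
    simp [map_sub, map_mul, Complex.conj_ofReal, Complex.conj_I]
  rw [map_inv₀, hconj]
  push_cast
  field_simp
  ring_nf
  have h3 : Complex.I ^ 3 = -Complex.I := by
    rw [pow_succ, Complex.I_sq]; ring
  rw [mul_comm] at h1 h2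
  field_simp
  linear_combination (2 * Complex.I * (η:ℂ)^3) * Complex.I_sq

/-- For a self-adjoint matrix `A`, intervals `I_j = [E_j − η, E_j + η]` and
`z_j = E_j + iη`, the quantum moment `L_{I₁I₂}(A,K)` is bounded by
`(4η²/|Λ_{I₁}|) Tr(K Im R^{z₁} K* Im R^{z₂})`, where `R^z = (A − z)⁻¹` and
`Im R^z = (R^z − (R^z)*)/(2i)`. -/
theorem stmt1 (N : ℕ) (A K : Matrix (Fin N) (Fin N) ℂ)
    (hA : A.IsHermitian)
    (φ : Fin N → (Fin N → ℂ)) (eig : Fin N → ℝ)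
    (horth : ∀ α β, dotc (φ α) (φ β) = if α = β then 1 else 0)
    (heig : ∀ α, A.mulVec (φ α) = (eig α : ℂ) • φ α)
    (E₁ E₂ : ℝ) (η : ℝ) (hη : 0 < η)
    (I₁ I₂ : Set ℝ) (hI₁ : I₁ = Set.Icc (E₁ - η) (E₁ + η)) (hI₂ : I₂ = Set.Icc (E₂ - η) (E₂ + η))
    (hΛ : {α | eig α ∈ I₁}.Nonempty)
    (z₁ z₂ : ℂ) (hz₁ : z₁ = (E₁ : ℂ) + η * Complex.I) (hz₂ : z₂ = (E₂ : ℂ) + η * Complex.I)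
    (R₁ R₂ ImR₁ ImR₂ : Matrix (Fin N) (Fin N) ℂ)
    (hR₁ : R₁ = (A - z₁ • (1 : Matrix (Fin N) (Fin N) ℂ))⁻¹)
    (hR₂ : R₂ = (A - z₂ • (1 : Matrix (Fin N) (Fin N) ℂ))⁻¹)
    (hImR₁ : ImR₁ = (2 * Complex.I)⁻¹ • (R₁ - R₁ᴴ))
    (hImR₂ : ImR₂ = (2 * Complex.I)⁻¹ • (R₂ - R₂ᴴ))
    (L : ℝ)
    (hL : L = ((Set.ncard {α | eig α ∈ I₁} : ℝ))⁻¹ *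
      ∑ α, ∑ β, (if eig α ∈ I₁ ∧ eig β ∈ I₂ then
        ‖dotc (φ β) (K.mulVec (φ α))‖ ^ 2 else 0)) :
    L ≤ (4 * η ^ 2 / (Set.ncard {α | eig α ∈ I₁} : ℝ)) *
      (Matrix.trace (K * ImR₁ * Kᴴ * ImR₂)).re := by
  classical
  set U : Matrix (Fin N) (Fin N) ℂ := Matrix.of (fun i α => φ α i) with hUdef
  -- orthonormality
  have hUU' : Uᴴ * U = 1 := by
    ext α β
    have := horth α β
    simpa [Matrix.mul_apply, Matrix.conjTranspose_apply, dotc, Matrix.one_apply, hUdef] using this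
  have hU'U : U * Uᴴ = 1 := mul_eq_one_comm.mp hUU'
  -- eigen relation
  have hAU : A * U = U * Matrix.diagonal (fun α => (eig α : ℂ)) := by
    ext i α
    have h := congrFun (heig α) i
    simp only [Matrix.mulVec, dotProduct, Pi.smul_apply, smul_eq_mul] at h
    simp only [Matrix.mul_apply, hUdef, Matrix.of_apply]
    rw [h]
    simp [Matrix.diagonal_apply, Finset.sum_ite_eq, mul_comm]
  -- resolvent formula
  have hres : ∀ z : ℂ, z.im ≠ 0 →
      (A - z • (1 : Matrix (Fin N) (Fin N) ℂ))⁻¹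
        = U * Matrix.diagonal (fun α => ((eig α : ℂ) - z)⁻¹) * Uᴴ := by
    intro z hz
    have hdne : ∀ α, ((eig α : ℂ) - z) ≠ 0 := by
      intro α h
      have h2 := congrArg Complex.im h
      simp at h2
      exact hz h2
    have hAz : A - z • (1 : Matrix (Fin N) (Fin N) ℂ)
        = U * Matrix.diagonal (fun α => (eig α : ℂ) - z) * Uᴴ := by
      have hA' : A = U * Matrix.diagonal (fun α => (eig α : ℂ)) * Uᴴ := by
        calc A = A * (U * Uᴴ) := by rw [hU'U, Matrix.mul_one]
        _ = (A * U) * Uᴴ := by rw [Matrix.mul_assoc]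
        _ = U * Matrix.diagonal (fun α => (eig α : ℂ)) * Uᴴ := by rw [hAU]
      have hz1 : z • (1 : Matrix (Fin N) (Fin N) ℂ)
          = U * Matrix.diagonal (fun _ => z) * Uᴴ := by
        rw [show Matrix.diagonal (fun _ : Fin N => z) = z • (1 : Matrix (Fin N) (Fin N) ℂ) by
          ext i j; by_cases h : i = j <;> simp [Matrix.diagonal, Matrix.one_apply, h]]
        rw [Matrix.mul_smul, Matrix.mul_one, Matrix.smul_mul, hU'U]
      rw [hA', hz1, ← Matrix.sub_mul, ← Matrix.mul_sub, Matrix.diagonal_sub]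
    have hright : (A - z • (1 : Matrix (Fin N) (Fin N) ℂ)) *
        (U * Matrix.diagonal (fun α => ((eig α : ℂ) - z)⁻¹) * Uᴴ) = 1 := by
      rw [hAz]
      calc U * Matrix.diagonal (fun α => (eig α : ℂ) - z) * Uᴴ *
            (U * Matrix.diagonal (fun α => ((eig α : ℂ) - z)⁻¹) * Uᴴ)
          = U * Matrix.diagonal (fun α => (eig α : ℂ) - z) * (Uᴴ * U) *
            (Matrix.diagonal (fun α => ((eig α : ℂ) - z)⁻¹) * Uᴴ) := by
            simp only [Matrix.mul_assoc]
        _ = U * (Matrix.diagonal (fun α => (eig α : ℂ) - z) *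
            Matrix.diagonal (fun α => ((eig α : ℂ) - z)⁻¹)) * Uᴴ := by
            rw [hUU']; simp only [Matrix.mul_assoc, Matrix.one_mul, Matrix.mul_one]
        _ = 1 := by
            rw [Matrix.diagonal_mul_diagonal]
            have : (fun α => ((eig α : ℂ) - z) * ((eig α : ℂ) - z)⁻¹) = fun _ => (1:ℂ) := by
              funext α; exact mul_inv_cancel₀ (hdne α)
            rw [this, Matrix.diagonal_one, Matrix.mul_one, hU'U]
    exact Matrix.inv_eq_right_inv hright
  -- Im R formulas
  have hIm : ∀ (z : ℂ) (E : ℝ), z = (E:ℂ) + η * Complex.I →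
      (2 * Complex.I)⁻¹ • ((U * Matrix.diagonal (fun α => ((eig α : ℂ) - z)⁻¹) * Uᴴ)
        - (U * Matrix.diagonal (fun α => ((eig α : ℂ) - z)⁻¹) * Uᴴ)ᴴ)
      = U * Matrix.diagonal (fun α => ((η / ((eig α - E)^2 + η^2) : ℝ) : ℂ)) * Uᴴ := by
    intro z E hz
    have hct : (U * Matrix.diagonal (fun α => ((eig α : ℂ) - z)⁻¹) * Uᴴ)ᴴ
        = U * Matrix.diagonal (fun α => conj (((eig α : ℂ) - z)⁻¹)) * Uᴴ := by
      rw [Matrix.conjTranspose_mul, Matrix.conjTranspose_mul, Matrix.conjTranspose_conjTranspose,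
        Matrix.diagonal_conjTranspose, Matrix.mul_assoc]
      rfl
    rw [hct, ← Matrix.sub_mul, ← Matrix.mul_sub, Matrix.diagonal_sub,
      ← Matrix.smul_mul, ← Matrix.mul_smul, ← Matrix.diagonal_smul]
    have hfun : ((2 * Complex.I)⁻¹ • fun i => ((eig i : ℂ) - z)⁻¹ - conj (((eig i : ℂ) - z)⁻¹))
        = (fun α => ((η / ((eig α - E)^2 + η^2) : ℝ) : ℂ)) := by
      funext α
      have hw : (eig α : ℂ) - z = ((eig α - E : ℝ) : ℂ) - (η:ℂ) * Complex.I := by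
        rw [hz]; push_cast; ring
      have hk := key_scalar (eig α - E) η hη
      simp only [Pi.smul_apply, smul_eq_mul, hw]
      rw [hk]
    rw [hfun]
  -- diagonalized Im R
  have hIm₁ : ImR₁ = U * Matrix.diagonal
      (fun α => ((η / ((eig α - E₁)^2 + η^2) : ℝ) : ℂ)) * Uᴴ := by
    have him : z₁.im ≠ 0 := by rw [hz₁]; simp [hη.ne']
    rw [hImR₁, hR₁, hres z₁ him]
    exact hIm z₁ E₁ hz₁
  have hIm₂ : ImR₂ = U * Matrix.diagonal
      (fun α => ((η / ((eig α - E₂)^2 + η^2) : ℝ) : ℂ)) * Uᴴ := by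
    have him : z₂.im ≠ 0 := by rw [hz₂]; simp [hη.ne']
    rw [hImR₂, hR₂, hres z₂ him]
    exact hIm z₂ E₂ hz₂
  set g₁ : Fin N → ℝ := fun α => η / ((eig α - E₁)^2 + η^2) with hg₁def
  set g₂ : Fin N → ℝ := fun α => η / ((eig α - E₂)^2 + η^2) with hg₂def
  set M : Matrix (Fin N) (Fin N) ℂ := Uᴴ * K * U with hMdef
  have hM : ∀ α β, M β α = dotc (φ β) (K.mulVec (φ α)) := by
    intro α β
    simp only [hMdef, Matrix.mul_assoc, Matrix.mul_apply, Matrix.conjTranspose_apply, hUdef,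
      Matrix.of_apply, dotc, Matrix.mulVec, dotProduct, RCLike.star_def]
  -- trace formula
  have htr : Matrix.trace (K * ImR₁ * Kᴴ * ImR₂)
      = ∑ β, ∑ α, M β α * (g₁ α : ℂ) * conj (M β α) * (g₂ β : ℂ) := by
    rw [hIm₁, hIm₂]
    have e1 : K * (U * Matrix.diagonal (fun α => ((g₁ α : ℝ) : ℂ)) * Uᴴ) * Kᴴ *
          (U * Matrix.diagonal (fun α => ((g₂ α : ℝ) : ℂ)) * Uᴴ)
        = (K * (U * Matrix.diagonal (fun α => ((g₁ α : ℝ) : ℂ)) * Uᴴ) * Kᴴ *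
          (U * Matrix.diagonal (fun α => ((g₂ α : ℝ) : ℂ)))) * Uᴴ := by
      simp only [Matrix.mul_assoc]
    rw [e1, Matrix.trace_mul_comm]
    have e2 : Uᴴ * (K * (U * Matrix.diagonal (fun α => ((g₁ α : ℝ) : ℂ)) * Uᴴ) * Kᴴ *
          (U * Matrix.diagonal (fun α => ((g₂ α : ℝ) : ℂ))))
        = M * Matrix.diagonal (fun α => ((g₁ α : ℝ) : ℂ)) * Mᴴ *
          Matrix.diagonal (fun α => ((g₂ α : ℝ) : ℂ)) := by
      rw [hMdef]
      simp only [Matrix.conjTranspose_mul, Matrix.conjTranspose_conjTranspose, Matrix.mul_assoc]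
    rw [e2]
    simp only [Matrix.trace, Matrix.diag, Matrix.mul_apply, Matrix.diagonal_apply,
      Matrix.conjTranspose_apply, ite_mul, zero_mul, mul_ite, mul_zero,
      Finset.sum_ite_eq, Finset.sum_ite_eq', Finset.mem_univ, if_true]
    refine Finset.sum_congr rfl (fun β _ => ?_)
    rw [Finset.sum_mul]
    refine Finset.sum_congr rfl (fun α _ => ?_)
    rw [show star (M β α) = conj (M β α) from rfl]
    try ring
  have htrre : (Matrix.trace (K * ImR₁ * Kᴴ * ImR₂)).re
      = ∑ β, ∑ α, ‖M β α‖^2 * g₁ α * g₂ β := by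
    rw [htr, Complex.re_sum]
    refine Finset.sum_congr rfl (fun β _ => ?_)
    rw [Complex.re_sum]
    refine Finset.sum_congr rfl (fun α _ => ?_)
    have e : M β α * (g₁ α : ℂ) * conj (M β α) * (g₂ β : ℂ)
        = ((‖M β α‖^2 * g₁ α * g₂ β : ℝ) : ℂ) := by
      have : M β α * (g₁ α : ℂ) * conj (M β α) * (g₂ β : ℂ)
          = (M β α * conj (M β α)) * ((g₁ α : ℂ) * (g₂ β : ℂ)) := by ring
      rw [this, Complex.mul_conj, Complex.normSq_eq_norm_sq]
      push_cast
      ring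
    rw [e, Complex.ofReal_re]
  -- lower bounds for g on the intervals
  have hgpos : ∀ (E : ℝ) (x : ℝ), 0 < η / ((x - E)^2 + η^2) := by
    intro E x; positivity
  have hglb : ∀ (E : ℝ) (x : ℝ), x ∈ Set.Icc (E - η) (E + η) →
      1 / (2*η) ≤ η / ((x - E)^2 + η^2) := by
    intro E x hx
    have h1 : (x - E)^2 ≤ η^2 := by nlinarith [hx.1, hx.2]
    have h2 : (0:ℝ) < (x - E)^2 + η^2 := by positivity
    rw [div_le_div_iff₀ (by positivity) h2]
    nlinarith
  -- cardinality positivity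
  have hnpos : (0:ℝ) < (Set.ncard {α | eig α ∈ I₁} : ℝ) := by
    have : 0 < Set.ncard {α | eig α ∈ I₁} := (Set.ncard_pos (Set.toFinite _)).mpr hΛ
    exact_mod_cast this
  rw [hL, htrre]
  rw [div_mul_eq_mul_div, mul_comm (4 * η^2) _, mul_div_assoc, div_eq_inv_mul,
    ← mul_assoc, mul_comm _ ((Set.ncard {α | eig α ∈ I₁} : ℝ))⁻¹, mul_assoc]
  refine mul_le_mul_of_nonneg_left ?_ (inv_nonneg.mpr hnpos.le)
  rw [Finset.sum_comm]
  rw [Finset.sum_mul]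
  refine Finset.sum_le_sum (fun β _ => ?_)
  rw [Finset.sum_mul]
  refine Finset.sum_le_sum (fun α _ => ?_)
  by_cases h : eig α ∈ I₁ ∧ eig β ∈ I₂
  · rw [if_pos h, ← hM α β]
    have hb₁ : 1 / (2*η) ≤ g₁ α := by
      rw [hg₁def]
      exact hglb E₁ (eig α) (by rw [← hI₁]; exact h.1)
    have hb₂ : 1 / (2*η) ≤ g₂ β := by
      rw [hg₂def]
      exact hglb E₂ (eig β) (by rw [← hI₂]; exact h.2)
    have hnn : (0:ℝ) ≤ ‖M β α‖^2 := by positivity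
    have hone : 1 ≤ 4 * η^2 * (g₁ α * g₂ β) := by
      have hp : (0:ℝ) < 1/(2*η) := by positivity
      have h12 : (1/(2*η)) * (1/(2*η)) ≤ g₁ α * g₂ β :=
        mul_le_mul hb₁ hb₂ hp.le (le_trans hp.le hb₁)
      have he : (1/(2*η)) * (1/(2*η)) = 1/(4*η^2) := by
        field_simp; ring
      rw [he] at h12
      calc (1:ℝ) = 4*η^2 * (1/(4*η^2)) := by field_simp
      _ ≤ 4*η^2 * (g₁ α * g₂ β) := mul_le_mul_of_nonneg_left h12 (by positivity)
    calc ‖M β α‖^2 = ‖M β α‖^2 * 1 := by ring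
    _ ≤ ‖M β α‖^2 * (4 * η^2 * (g₁ α * g₂ β)) := mul_le_mul_of_nonneg_left hone hnn
    _ = ‖M β α‖^2 * g₁ α * g₂ β * (4 * η^2) := by ring
  · rw [if_neg h]
    have : (0:ℝ) < g₁ α := by rw [hg₁def]; exact hgpos E₁ (eig α)
    have : (0:ℝ) < g₂ β := by rw [hg₂def]; exact hgpos E₂ (eig β)
    positivity
end

section
/- There exists a numerical constant c > 0 such that: for any a > 0, η > 0, integer n ≥ 1 and 0 < ε ≤ 1 with nε ≥ c·max(a/η, 1), and for any z = E + iη with E ∈ ℝ, there exists a nonnegative polynomial s of degree at most 2n such that sup_{λ∈[−a,a]} |η·Im(1/(λ−z)) − s(λ)| ≤ e^{−1/ε}. -/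
open Polynomial Complex

private lemma abs_cos_lb' (w : ℂ) (h : 0 ≤ w.im) :
    Real.sinh w.im ≤ ‖Complex.cos w‖ := by
  have hre : (Complex.cos w).re = Real.cos w.re * Real.cosh w.im := by
    rw [Complex.cos_eq]
    simp [Complex.cos_ofReal_re, Complex.sin_ofReal_re, Complex.sinh_ofReal_re,
      Complex.cosh_ofReal_re]
  have him : (Complex.cos w).im = -(Real.sin w.re * Real.sinh w.im) := by
    rw [Complex.cos_eq]
    simp [Complex.cos_ofReal_re, Complex.sin_ofReal_re, Complex.sinh_ofReal_re,
      Complex.cosh_ofReal_re]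
  have hsq : Real.sinh w.im ^ 2 ≤ ‖Complex.cos w‖ ^ 2 := by
    rw [Complex.sq_norm, Complex.normSq_apply, hre, him]
    have h1 : Real.cosh w.im ^ 2 = Real.sinh w.im ^ 2 + 1 := Real.cosh_sq w.im
    have h2 : Real.sin w.re ^ 2 + Real.cos w.re ^ 2 = 1 := Real.sin_sq_add_cos_sq w.re
    nlinarith [sq_nonneg (Real.sin w.re * Real.sinh w.im), sq_nonneg (Real.cos w.re)]
  nlinarith [Real.sinh_nonneg_iff.2 h, norm_nonneg (Complex.cos w)]

private lemma cheb_lb' (n : ℕ) (z : ℂ) :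
    Real.sinh ((n : ℝ) * Real.arsinh z.im) ≤
      ‖(Polynomial.Chebyshev.T ℂ n).eval z‖ := by
  obtain ⟨θ₀, hθ₀⟩ := Complex.cos_surjective z
  set θ : ℂ := if 0 ≤ θ₀.im then θ₀ else -θ₀ with hθdef
  have hθ : Complex.cos θ = z := by
    by_cases h : 0 ≤ θ₀.im <;> simp [hθdef, h, Complex.cos_neg, hθ₀]
  have hθim : 0 ≤ θ.im := by
    by_cases h : 0 ≤ θ₀.im <;> simp [hθdef, h] <;> linarith [lt_of_not_ge h]
  have hsinh : z.im ≤ Real.sinh θ.im := by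
    have himz : z.im = -(Real.sin θ.re * Real.sinh θ.im) := by
      rw [← hθ, Complex.cos_eq]
      simp [Complex.sin_ofReal_re, Complex.sinh_ofReal_re]
    have hs := Real.sinh_nonneg_iff.2 hθim
    have := Real.neg_one_le_sin θ.re
    have := Real.sin_le_one θ.re
    nlinarith
  have harsinh : Real.arsinh z.im ≤ θ.im := by
    have := Real.arsinh_le_arsinh.2 hsinh
    rwa [Real.arsinh_sinh] at this
  have heval : (Polynomial.Chebyshev.T ℂ n).eval z = Complex.cos ((n : ℂ) * θ) := by
    rw [← hθ]
    have := Polynomial.Chebyshev.T_complex_cos θ (n : ℤ)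
    simpa using this
  rw [heval]
  have h1 : Real.sinh ((n : ℝ) * Real.arsinh z.im) ≤ Real.sinh ((n : ℝ) * θ.im) := by
    apply Real.sinh_le_sinh.2
    exact mul_le_mul_of_nonneg_left harsinh (Nat.cast_nonneg n)
  refine h1.trans ?_
  have him : ((n : ℂ) * θ).im = (n : ℝ) * θ.im := by simp
  have := abs_cos_lb' ((n : ℂ) * θ) (by rw [him]; positivity)
  rwa [him] at this

private lemma log_one_add_ge' (x : ℝ) (h0 : 0 ≤ x) (h1 : x ≤ 1) :
    x * Real.log 2 ≤ Real.log (1+x) := by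
  have hc := strictConcaveOn_log_Ioi.concaveOn
  have h := hc.2 (Set.mem_Ioi.2 one_pos) (Set.mem_Ioi.2 two_pos)
    (sub_nonneg.2 h1) h0 (by ring)
  simp only [smul_eq_mul, Real.log_one, mul_one, mul_zero, zero_add] at h
  have he : 1 - x + x * 2 = 1 + x := by ring
  rw [he] at h
  linarith

private lemma growth_lb' (a η ε : ℝ) (n : ℕ) (ha : 0 < a) (hη : 0 < η) (hε : 0 < ε)
    (hε1 : ε ≤ 1) (hn : 10 * max (a / η) 1 ≤ (n : ℝ) * ε) :
    3 * Real.exp (1 / ε) ≤ Real.sinh ((n : ℝ) * Real.arsinh (η / a)) := by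
  set μ : ℝ := min (η / a) 1 with hμdef
  have hμ0 : 0 < μ := lt_min (div_pos hη ha) one_pos
  have hμ1 : μ ≤ 1 := min_le_right _ _
  have hμM : μ * max (a / η) 1 = 1 := by
    rcases le_total (a / η) 1 with h | h
    · have h' : 1 ≤ η / a := (one_le_div ha).2 (by rw [div_le_one hη] at h; linarith)
      simp [hμdef, max_eq_right h, min_eq_right h']
    · have h' : η / a ≤ 1 := (div_le_one ha).2 (by rw [one_le_div hη] at h; linarith)
      rw [max_eq_left h, hμdef, min_eq_left h']
      field_simp
  have hars : Real.log (1 + μ) ≤ Real.arsinh (η / a) := by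
    have h1 : Real.log (1 + μ) ≤ Real.arsinh μ := by
      rw [Real.log_le_iff_le_exp (by linarith)]
      rw [Real.exp_arsinh]
      have h3 : (1:ℝ) ≤ Real.sqrt (1 + μ ^ 2) := by
        have h2 := Real.sqrt_le_sqrt (show (1:ℝ) ≤ 1 + μ ^ 2 by nlinarith)
        rwa [Real.sqrt_one] at h2
      linarith
    exact h1.trans (Real.arsinh_le_arsinh.2 (min_le_left _ _))
  have hlog := log_one_add_ge' μ hμ0.le hμ1
  have hnμ : 10 / ε ≤ (n : ℝ) * μ := by
    rw [div_le_iff₀ hε]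
    nlinarith [mul_le_mul_of_nonneg_right hn hμ0.le]
  have hlog2 : (0.6931471803 : ℝ) < Real.log 2 := Real.log_two_gt_d9
  have hlog7 : Real.log 7 ≤ 3 * Real.log 2 := by
    calc Real.log 7 ≤ Real.log 8 := Real.log_le_log (by norm_num) (by norm_num)
      _ = 3 * Real.log 2 := by
          rw [show (8:ℝ) = 2 ^ 3 by norm_num, Real.log_pow]; push_cast; ring
  have hK : 1 / ε + Real.log 7 ≤ (n : ℝ) * Real.arsinh (η / a) := by
    have h1 : (n : ℝ) * μ * Real.log 2 ≤ (n : ℝ) * Real.arsinh (η / a) := by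
      have h1a := mul_le_mul_of_nonneg_left hlog (Nat.cast_nonneg n : (0:ℝ) ≤ n)
      have h2 := mul_le_mul_of_nonneg_left hars (Nat.cast_nonneg n : (0:ℝ) ≤ n)
      calc (n : ℝ) * μ * Real.log 2 = (n:ℝ) * (μ * Real.log 2) := by ring
        _ ≤ (n:ℝ) * Real.log (1 + μ) := h1a
        _ ≤ _ := h2
    have h2 : 10 / ε * Real.log 2 ≤ (n : ℝ) * μ * Real.log 2 :=
      mul_le_mul_of_nonneg_right hnμ (by linarith)
    have h3 : 1 / ε + Real.log 7 ≤ 10 / ε * Real.log 2 := by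
      have hεi : 1 ≤ 1 / ε := by rw [le_div_iff₀ hε]; linarith
      have hl7 : 0 ≤ Real.log 7 := Real.log_nonneg (by norm_num)
      have h4 : 1 / ε + Real.log 7 ≤ (1 + Real.log 7) * (1/ε) := by nlinarith
      refine h4.trans ?_
      have h5 : (1 + Real.log 7) ≤ 10 * Real.log 2 := by nlinarith
      calc (1 + Real.log 7) * (1/ε) ≤ 10 * Real.log 2 * (1/ε) :=
            mul_le_mul_of_nonneg_right h5 (by positivity)
        _ = 10 / ε * Real.log 2 := by ring
    linarith
  calc 3 * Real.exp (1/ε) ≤ Real.sinh (1/ε + Real.log 7) := by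
        rw [Real.sinh_eq]
        have h1 : Real.exp (1/ε + Real.log 7) = 7 * Real.exp (1/ε) := by
          rw [Real.exp_add, Real.exp_log (by norm_num)]; ring
        have h2 : Real.exp (-(1/ε + Real.log 7)) ≤ 1 := by
          rw [Real.exp_le_one_iff]
          have hl7 : 0 ≤ Real.log 7 := Real.log_nonneg (by norm_num)
          have hεp : 0 < 1/ε := by positivity
          linarith
        have h3 : 1 ≤ Real.exp (1/ε) := by
          rw [show (1:ℝ) = Real.exp 0 by simp]
          exact Real.exp_le_exp.2 (by positivity)
        rw [h1]
        linarith
    _ ≤ Real.sinh ((n : ℝ) * Real.arsinh (η / a)) := Real.sinh_le_sinh.2 hK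

private lemma natDegree_T_le' (R : Type*) [CommRing R] (n : ℕ) :
    (Polynomial.Chebyshev.T R n).natDegree ≤ n := by
  induction n using Nat.strong_induction_on with
  | _ n ih =>
    match n with
    | 0 => simp [Polynomial.Chebyshev.T_zero]
    | 1 => simp [Polynomial.Chebyshev.T_one]; exact natDegree_X_le
    | (k+2) =>
      have h : Polynomial.Chebyshev.T R ((k:ℤ)+2)
          = 2 * X * Polynomial.Chebyshev.T R ((k:ℤ)+1) - Polynomial.Chebyshev.T R k :=
        Polynomial.Chebyshev.T_add_two R k
      have hcast : ((k+2:ℕ):ℤ) = (k:ℤ)+2 := by push_cast; ring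
      have hcast1 : ((k+1:ℕ):ℤ) = (k:ℤ)+1 := by push_cast; ring
      rw [hcast, h]
      refine (natDegree_sub_le _ _).trans ?_
      have h1 : (2 * X * Polynomial.Chebyshev.T R ((k:ℤ)+1)).natDegree ≤ k+2 := by
        refine (natDegree_mul_le).trans ?_
        have h2 : (2 * X : R[X]).natDegree ≤ 1 := by
          refine (natDegree_mul_le).trans ?_
          simp [natDegree_X_le]
        have h3 := ih (k+1) (by omega)
        rw [hcast1] at h3
        omega
      have h4 := ih k (by omega)
      exact max_le h1 (h4.trans (by omega))

set_option maxHeartbeats 1000000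

/-- There is a numerical constant `c > 0` such that for all `a > 0`, `η > 0`,
`n ≥ 1` and `0 < ε ≤ 1` with `nε ≥ c·max(a/η, 1)`, and every `z = E + iη`, there is a
nonnegative real polynomial `s` of degree at most `2n` with
`sup_{λ ∈ [−a,a]} |η·Im(1/(λ−z)) − s(λ)| ≤ e^{−1/ε}`.
Here `η·Im(1/(λ−z)) = η²/((λ−E)² + η²)`. -/
theorem stmt3 :
    ∃ c : ℝ, 0 < c ∧
      ∀ a η : ℝ, 0 < a → 0 < η → ∀ n : ℕ, 1 ≤ n → ∀ ε : ℝ, 0 < ε → ε ≤ 1 →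
        c * max (a / η) 1 ≤ (n : ℝ) * ε →
        ∀ E : ℝ, ∃ s : Polynomial ℝ,
          s.natDegree ≤ 2 * n ∧ (∀ x : ℝ, 0 ≤ s.eval x) ∧
          ∀ l ∈ Set.Icc (-a) a,
            |η ^ 2 / ((l - E) ^ 2 + η ^ 2) - s.eval l| ≤ Real.exp (-1 / ε) := by
  refine ⟨10, by norm_num, ?_⟩
  intro a η ha hη n hn1 ε hε hε1 hcε E
  set z : ℂ := (E : ℂ) + (η : ℂ) * Complex.I with hzdef
  set z₀ : ℂ := (a : ℂ)⁻¹ * z with hz₀def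
  have hz₀im : z₀.im = η / a := by
    have h1 : ((a : ℂ))⁻¹ = ((a⁻¹ : ℝ) : ℂ) := by rw [Complex.ofReal_inv]
    have h3 : z.im = η := by rw [hzdef]; simp
    rw [hz₀def, h1, Complex.mul_im, Complex.ofReal_re, Complex.ofReal_im, h3]
    ring
  set V : ℂ := (Polynomial.Chebyshev.T ℂ n).eval z₀ with hVdef
  have hexp1 : 1 ≤ Real.exp (1/ε) := by
    rw [show (1:ℝ) = Real.exp 0 by simp]
    exact Real.exp_le_exp.2 (by positivity)
  have hVlb : 3 * Real.exp (1/ε) ≤ ‖V‖ := by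
    have h1 := cheb_lb' n z₀
    have h2 := growth_lb' a η ε n ha hη hε hε1 hcε
    rw [hz₀im] at h1
    exact h2.trans h1
  have hV1 : 1 ≤ ‖V‖ := by linarith
  have hVpos : 0 < ‖V‖ := by linarith
  have hVne : V ≠ 0 := by
    intro h; rw [h] at hV1; simp at hV1; linarith
  set Xr : ℝ := V.re with hXrdef
  set Yr : ℝ := V.im with hYrdef
  set N : ℝ := Complex.normSq V with hNdef
  have hN : 0 < N := Complex.normSq_pos.2 hVne
  have hNxy : N = Xr^2 + Yr^2 := by
    rw [hNdef, Complex.normSq_apply]; ring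
  have hNabs : N = ‖V‖ ^ 2 := (Complex.sq_norm V).symm
  set v : ℝ[X] := (Polynomial.Chebyshev.T ℝ n).comp (C a⁻¹ * X) with hvdef
  set U : ℝ[X] := C (2*Xr/N) * v - C (1/N) * v^2 with hUdef
  set Q : ℝ[X] := C (η^2) * (1 - U) with hQdef
  set dp : ℝ[X] := (X - C E)^2 + C (η^2) with hdpdef
  have hdpmonic : dp.Monic := by
    have h1 : ((X - C E)^2 : ℝ[X]).Monic := (monic_X_sub_C E).pow 2
    have h2 : ((X - C E)^2 : ℝ[X]).degree = 2 := by
      rw [degree_pow, degree_X_sub_C]; rfl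
    exact h1.add_of_left (by rw [h2]; exact lt_of_le_of_lt degree_C_le (by norm_num))
  have hdpdeg : dp.degree = 2 := by
    have h2 : ((X - C E)^2 : ℝ[X]).degree = 2 := by
      rw [degree_pow, degree_X_sub_C]; rfl
    rw [hdpdef, degree_add_eq_left_of_degree_lt, h2]
    rw [h2]; exact lt_of_le_of_lt degree_C_le (by norm_num)
  have haevalT : ∀ w : ℂ, Polynomial.aeval w (Polynomial.Chebyshev.T ℝ n) =
      (Polynomial.Chebyshev.T ℂ n).eval w := by
    intro w
    rw [Polynomial.aeval_def, ← Polynomial.eval_map, Polynomial.Chebyshev.map_T]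
  have hvz : Polynomial.aeval z v = V := by
    rw [hvdef, Polynomial.aeval_comp, haevalT, hVdef]
    congr 1
    rw [hz₀def]
    simp only [map_mul, Polynomial.aeval_C, Polynomial.aeval_X, Complex.coe_algebraMap]
    push_cast
    ring
  have hNC : ((N:ℂ)) ≠ 0 := by exact_mod_cast hN.ne'
  have hkey : 2*(Xr:ℂ)*V - V^2 = (N:ℂ) := by
    have h2re : Complex.re 2 = 2 := by norm_num
    have h2im : Complex.im 2 = 0 := by norm_num
    simp only [Complex.ext_iff, Complex.mul_re, Complex.mul_im, Complex.sub_re,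
      Complex.sub_im, Complex.ofReal_re, Complex.ofReal_im, h2re, h2im, pow_two]
    rw [hNxy]
    constructor <;> ring
  have hUz : Polynomial.aeval z U = 1 := by
    rw [hUdef, map_sub, map_mul, map_mul, map_pow, hvz, Polynomial.aeval_C,
      Polynomial.aeval_C]
    simp only [Complex.coe_algebraMap, Complex.ofReal_div]
    rw [div_mul_eq_mul_div, div_mul_eq_mul_div, ← sub_div, div_eq_one_iff_eq hNC]
    push_cast
    push_cast at hkey
    linear_combination hkey
  have hQz : Polynomial.aeval z Q = 0 := by
    rw [hQdef, map_mul, map_sub, map_one, hUz]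
    simp
  have hdz : Polynomial.aeval z dp = 0 := by
    rw [hdpdef]
    simp only [map_add, map_pow, map_sub, Polynomial.aeval_X, Polynomial.aeval_C,
      Complex.coe_algebraMap]
    rw [hzdef]
    linear_combination ((η:ℂ)^2) * Complex.I_sq
  have hmod : Q %ₘ dp = 0 := by
    set r : ℝ[X] := Q %ₘ dp with hrdef
    have hdeg : r.degree < 2 := by
      have := Polynomial.degree_modByMonic_lt Q hdpmonic
      rwa [hdpdeg] at this
    have hdeg1 : r.degree ≤ 1 := by
      by_cases hr0 : r = 0
      · simp [hr0]
      · have h1 : r.natDegree < 2 :=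
          (Polynomial.natDegree_lt_iff_degree_lt hr0).2 (by exact_mod_cast hdeg)
        have h2 : r.natDegree ≤ 1 := by omega
        exact Polynomial.degree_le_natDegree.trans (by exact_mod_cast h2)
    have hrz : Polynomial.aeval z r = 0 := by
      have h := Polynomial.modByMonic_add_div Q dp
      have h2 := congrArg (Polynomial.aeval z) h
      rw [map_add, map_mul, hdz, hQz, zero_mul, add_zero] at h2
      exact h2
    have hr1 : r = C (r.coeff 1) * X + C (r.coeff 0) :=
      Polynomial.eq_X_add_C_of_degree_le_one hdeg1
    rw [hr1, map_add, map_mul, Polynomial.aeval_X, Polynomial.aeval_C,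
      Polynomial.aeval_C] at hrz
    simp only [Complex.coe_algebraMap] at hrz
    rw [hzdef, Complex.ext_iff] at hrz
    simp only [Complex.add_re, Complex.add_im, Complex.mul_re, Complex.mul_im,
      Complex.ofReal_re, Complex.ofReal_im, Complex.I_re, Complex.I_im,
      Complex.zero_re, Complex.zero_im] at hrz
    obtain ⟨hre, him⟩ := hrz
    have hc1 : r.coeff 1 = 0 := by
      rcases mul_eq_zero.1 (show r.coeff 1 * η = 0 by linarith) with h | h
      · exact h
      · exact absurd h hη.ne'
    have hc0 : r.coeff 0 = 0 := by
      rw [hc1] at hre; nlinarith [hre]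
    rw [hr1, hc1, hc0]
    simp
  set s : ℝ[X] := Q /ₘ dp with hsdef
  have hQs : dp * s = Q := by
    have := Polynomial.modByMonic_add_div Q dp
    rw [hmod, zero_add] at this
    exact this
  clear_value s Q U v dp N Yr Xr V z₀ z
  have hvdeg : v.natDegree ≤ n := by
    rw [hvdef]
    refine Polynomial.natDegree_comp_le.trans ?_
    have h1 := natDegree_T_le' ℝ n
    have h2 : (C a⁻¹ * X : ℝ[X]).natDegree ≤ 1 :=
      (natDegree_C_mul_le _ _).trans natDegree_X_le
    calc (Polynomial.Chebyshev.T ℝ n).natDegree * (C a⁻¹ * X : ℝ[X]).natDegree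
        ≤ n * 1 := Nat.mul_le_mul h1 h2
      _ = n := by ring
  have hQdeg : Q.natDegree ≤ 2 * n := by
    rw [hQdef]
    refine (natDegree_C_mul_le _ _).trans ?_
    refine (natDegree_sub_le _ _).trans ?_
    simp only [natDegree_one]
    refine max_le (by omega) ?_
    rw [hUdef]
    refine (natDegree_sub_le _ _).trans ?_
    refine max_le ((natDegree_C_mul_le _ _).trans (by omega)) ?_
    refine (natDegree_C_mul_le _ _).trans ?_
    refine (natDegree_pow_le).trans (by omega)
  refine ⟨s, ?_, ?_, ?_⟩
  · by_cases hs0 : s = 0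
    · simp [hs0]
    · have hd0 : dp ≠ 0 := hdpmonic.ne_zero
      have hmul := Polynomial.natDegree_mul hd0 hs0
      rw [hQs] at hmul
      omega
  · intro x
    have hdx : 0 < dp.eval x := by
      rw [hdpdef]
      simp only [eval_add, eval_pow, eval_sub, eval_X, eval_C]
      positivity
    have hUx : U.eval x = (2*Xr/N)*(v.eval x) - (1/N)*(v.eval x)^2 := by
      rw [hUdef]
      simp only [eval_sub, eval_mul, eval_C, eval_pow]
    have hUle : U.eval x ≤ 1 := by
      rw [hUx, div_mul_eq_mul_div, div_mul_eq_mul_div, ← sub_div, div_le_one hN]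
      nlinarith [sq_nonneg (v.eval x - Xr), sq_nonneg Yr]
    have hQx : 0 ≤ Q.eval x := by
      rw [hQdef]
      simp only [eval_mul, eval_sub, eval_one, eval_C]
      have h1 : 0 ≤ 1 - U.eval x := by linarith
      exact mul_nonneg (by positivity) h1
    have hmul : dp.eval x * s.eval x = Q.eval x := by
      rw [← hQs, Polynomial.eval_mul]
    by_contra hneg
    push_neg at hneg
    have hlt : dp.eval x * s.eval x < 0 := mul_neg_of_pos_of_neg hdx hneg
    rw [hmul] at hlt
    linarith
  · intro l hl
    obtain ⟨hl1, hl2⟩ := hl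
    have hla1 : -1 ≤ l / a := by rw [le_div_iff₀ ha]; linarith
    have hla2 : l / a ≤ 1 := by rw [div_le_one ha]; linarith
    set t : ℝ := v.eval l with htdef
    have ht1 : |t| ≤ 1 := by
      have heq : t = (Polynomial.Chebyshev.T ℝ n).eval (a⁻¹ * l) := by
        rw [htdef, hvdef, Polynomial.eval_comp]
        simp only [eval_mul, eval_C, eval_X]
      have hal : a⁻¹ * l = Real.cos (Real.arccos (l/a)) := by
        rw [Real.cos_arccos hla1 hla2]; field_simp
      rw [heq, hal, Polynomial.Chebyshev.T_real_cos]
      exact Real.abs_cos_le_one _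
    have hdl : dp.eval l = (l - E)^2 + η^2 := by
      rw [hdpdef]
      simp only [eval_add, eval_pow, eval_sub, eval_X, eval_C]
    have hdlpos : 0 < dp.eval l := by rw [hdl]; positivity
    have hdlge : η^2 ≤ dp.eval l := by rw [hdl]; linarith [sq_nonneg (l - E)]
    have hmul2 : dp.eval l * s.eval l = Q.eval l := by
      rw [← hQs, Polynomial.eval_mul]
    have hseval : s.eval l = Q.eval l / dp.eval l := by
      rw [eq_div_iff hdlpos.ne']
      linear_combination hmul2
    have hUx : U.eval l = (2*Xr*t - t^2)/N := by
      rw [hUdef]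
      simp only [eval_sub, eval_mul, eval_C, eval_pow, ← htdef]
      ring
    have hQl : Q.eval l = η^2 * (1 - U.eval l) := by
      rw [hQdef]
      simp only [eval_mul, eval_sub, eval_one, eval_C]
    have hXrabs : |Xr| ≤ ‖V‖ := by
      rw [hXrdef]; exact Complex.abs_re_le_norm V
    have hUabs : |U.eval l| ≤ 3 / ‖V‖ := by
      rw [hUx, abs_div, abs_of_pos hN]
      have h2 : |2*Xr*t - t^2| ≤ 2 * |Xr| * |t| + |t| ^ 2 := by
        refine (abs_sub _ _).trans ?_
        rw [abs_mul, abs_mul, _root_.abs_two, _root_.abs_pow]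
      have h1 : |2*Xr*t - t^2| ≤ 3 * ‖V‖ := by
        nlinarith [abs_nonneg t, abs_nonneg Xr]
      rw [div_le_div_iff₀ hN hVpos]
      nlinarith [mul_le_mul_of_nonneg_right h1 (norm_nonneg V), hNabs]
    have hdiff : η ^ 2 / ((l - E) ^ 2 + η ^ 2) - s.eval l
        = η^2 * U.eval l / dp.eval l := by
      rw [hseval, hQl, hdl]
      ring
    rw [hdiff, abs_div, abs_of_pos hdlpos, abs_mul,
      abs_of_pos (by positivity : (0:ℝ) < η^2)]
    have hstep : η^2 * |U.eval l| / dp.eval l ≤ |U.eval l| := by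
      rw [div_le_iff₀ hdlpos]
      nlinarith [abs_nonneg (U.eval l)]
    refine hstep.trans (hUabs.trans ?_)
    have hexp : Real.exp (-1/ε) * Real.exp (1/ε) = 1 := by
      rw [← Real.exp_add, show (-1/ε + 1/ε : ℝ) = 0 by ring, Real.exp_zero]
    rw [div_le_iff₀ hVpos]
    nlinarith [Real.exp_pos (-1/ε),
      mul_le_mul_of_nonneg_left hVlb (Real.exp_pos (-1/ε)).le]
end

section
/- For every integer k ≥ 1, the k-th derivative of the function f(x) = (1+x²)^{−1/2} on ℝ satisfies ‖f^{(k)}‖_∞ ≤ (5k)^k. -/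
noncomputable def gg (k j : ℕ) (x : ℝ) : ℝ :=
  x ^ j * ((Real.sqrt (1 + x ^ 2))⁻¹) ^ (k + j + 1)

lemma s_pos (x : ℝ) : 0 < Real.sqrt (1 + x ^ 2) := by
  apply Real.sqrt_pos.2; positivity

lemma hasDerivAt_s (x : ℝ) :
    HasDerivAt (fun x : ℝ => Real.sqrt (1 + x ^ 2)) (x / Real.sqrt (1 + x ^ 2)) x := by
  have h : HasDerivAt (fun x : ℝ => 1 + x ^ 2) (2 * x) x := by
    simpa using ((hasDerivAt_pow 2 x).const_add 1)
  have := h.sqrt (by positivity)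
  convert this using 1
  rw [mul_comm (2:ℝ) (Real.sqrt _)]
  rw [mul_comm (2:ℝ) x, mul_div_mul_right]
  norm_num

lemma hasDerivAt_sinv_pow (n : ℕ) (x : ℝ) :
    HasDerivAt (fun x : ℝ => ((Real.sqrt (1 + x ^ 2))⁻¹) ^ (n + 1))
      (-((n:ℝ)+1) * x * ((Real.sqrt (1 + x ^ 2))⁻¹) ^ (n + 3)) x := by
  set s := fun x : ℝ => Real.sqrt (1 + x ^ 2) with hs
  have hne : s x ≠ 0 := (s_pos x).ne'
  have h1 : HasDerivAt (fun x => (s x)⁻¹) (-(x / s x) / (s x) ^ 2) x :=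
    (hasDerivAt_s x).inv hne
  have h2 := h1.pow (n + 1)
  convert h2 using 1
  · rfl
  · rfl
  · rfl
  have hinv : (s x)⁻¹ ^ (n + 3) = ((s x) ^ (n + 3))⁻¹ := by rw [inv_pow]
  have hinv2 : (s x)⁻¹ ^ (n + 1 - 1) = ((s x) ^ n)⁻¹ := by simp [inv_pow]
  rw [hinv, hinv2]
  field_simp
  push_cast
  ring

lemma hasDerivAt_gg (k j : ℕ) (x : ℝ) :
    HasDerivAt (gg k j)
      ((j : ℝ) * gg (k + 1) (j - 1) x - ((k : ℝ) + j + 1) * gg (k + 1) (j + 1) x) x := by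
  have h1 : HasDerivAt (fun x : ℝ => x ^ j) ((j : ℝ) * x ^ (j - 1)) x := hasDerivAt_pow j x
  have h2 := hasDerivAt_sinv_pow (k + j) x
  have h3 := h1.mul h2
  have : gg k j = fun x : ℝ => x ^ j * ((Real.sqrt (1 + x ^ 2))⁻¹) ^ (k + j + 1) := rfl
  rw [this]
  convert h3 using 1
  · rfl
  · rfl
  · rfl
  unfold gg
  rcases Nat.eq_zero_or_pos j with hj | hj
  · subst hj
    push_cast
    ring_nf
  · have hj1 : j - 1 + 1 = j := Nat.succ_pred_eq_of_pos hj
    have e1 : (k + 1) + (j - 1) + 1 = k + j + 1 := by omega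
    have e2 : (k + 1) + (j + 1) + 1 = k + j + 3 := by omega
    rw [e1, e2]
    push_cast
    ring

lemma gg_abs_le (k j : ℕ) (x : ℝ) : |gg k j x| ≤ 1 := by
  have hs := s_pos x
  have hxs : |x| ≤ Real.sqrt (1 + x ^ 2) := by
    rw [← Real.sqrt_sq_eq_abs]
    apply Real.sqrt_le_sqrt; nlinarith
  have hs1 : 1 ≤ Real.sqrt (1 + x ^ 2) := by
    have h := Real.sqrt_le_sqrt (show (1:ℝ) ≤ 1 + x ^ 2 by nlinarith)
    simpa using h
  set s := Real.sqrt (1 + x ^ 2)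
  have habs : |gg k j x| = |x| ^ j * (s⁻¹) ^ (k + j + 1) := by
    rw [gg, abs_mul, abs_pow, abs_pow, abs_inv, abs_of_pos hs]
  rw [habs]
  have hinv : s⁻¹ ≤ 1 := by
    rw [inv_le_one_iff₀]; right; exact hs1
  have hinvpos : 0 < s⁻¹ := inv_pos.2 hs
  calc |x| ^ j * s⁻¹ ^ (k + j + 1) ≤ s ^ j * s⁻¹ ^ (k + j + 1) := by
        apply mul_le_mul_of_nonneg_right (pow_le_pow_left₀ (abs_nonneg x) hxs j)
        positivity
    _ = s⁻¹ ^ (k + 1) := by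
        rw [show k + j + 1 = j + (k + 1) by ring, pow_add]
        rw [← mul_assoc, ← mul_pow, mul_inv_cancel₀ hs.ne', one_pow, one_mul]
    _ ≤ 1 := by
        calc s⁻¹ ^ (k+1) ≤ 1 ^ (k+1) := pow_le_pow_left₀ hinvpos.le hinv _
          _ = 1 := one_pow _

lemma rep (k : ℕ) : ∃ c : ℕ → ℝ, (∀ j, k < j → c j = 0) ∧
    (∑ j ∈ Finset.range (k+1), |c j|) ≤ (5 * k : ℝ) ^ k ∧
    ∀ x : ℝ, iteratedDeriv k (fun x : ℝ => (Real.sqrt (1 + x ^ 2))⁻¹) x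
        = ∑ j ∈ Finset.range (k+1), c j * gg k j x := by
  induction k with
  | zero =>
      refine ⟨fun j => if j = 0 then 1 else 0, ?_, ?_, ?_⟩
      · intro j hj; simp [show j ≠ 0 by omega]
      · simp
      · intro x
        simp [iteratedDeriv_zero, gg]
  | succ k ih =>
      obtain ⟨c, hc0, hcS, hrep⟩ := ih
      set f := fun x : ℝ => (Real.sqrt (1 + x ^ 2))⁻¹ with hf
      refine ⟨fun i => ((i:ℝ)+1) * c (i+1) - ((k:ℝ) + i) * (if i = 0 then 0 else c (i-1)),
        ?_, ?_, ?_⟩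
      · intro j hj
        have h1 : c (j+1) = 0 := hc0 _ (by omega)
        have h2 : j ≠ 0 := by omega
        have h3 : c (j-1) = 0 := hc0 _ (by omega)
        simp [h1, h2, h3]
      · -- coefficient bound
        have hstep : ∀ i ∈ Finset.range (k+2),
            |((i:ℝ)+1) * c (i+1) - ((k:ℝ) + i) * (if i = 0 then 0 else c (i-1))|
            ≤ ((i:ℝ)+1) * |c (i+1)| + ((k:ℝ) + i) * |if i = 0 then 0 else c (i-1)| := by
          intro i _
          calc |_| ≤ |((i:ℝ)+1) * c (i+1)| + |((k:ℝ) + i) * (if i = 0 then 0 else c (i-1))| :=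
                abs_sub _ _
            _ = _ := by
                rw [abs_mul, abs_mul, abs_of_nonneg (by positivity : (0:ℝ) ≤ (i:ℝ)+1),
                  abs_of_nonneg (by positivity : (0:ℝ) ≤ (k:ℝ)+i)]
        have hSnn : (0:ℝ) ≤ ∑ j ∈ Finset.range (k+1), |c j| :=
          Finset.sum_nonneg fun j _ => abs_nonneg _
        have hA : ∑ i ∈ Finset.range (k+2), ((i:ℝ)+1) * |c (i+1)|
            ≤ (k:ℝ) * ∑ j ∈ Finset.range (k+1), |c j| := by
          have h1 : ∑ i ∈ Finset.range (k+2), ((i:ℝ)+1) * |c (i+1)|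
              ≤ ∑ i ∈ Finset.range (k+2), (k:ℝ) * |c (i+1)| := by
            apply Finset.sum_le_sum
            intro i _
            rcases eq_or_ne (c (i+1)) 0 with h | h
            · simp [h]
            · have : i + 1 ≤ k := by by_contra hc; exact h (hc0 _ (by omega))
              apply mul_le_mul_of_nonneg_right _ (abs_nonneg _)
              push_cast; exact_mod_cast by exact_mod_cast (by exact_mod_cast this : ((i:ℝ)+1) ≤ (k:ℝ))
          have h2 : ∑ i ∈ Finset.range (k+2), |c (i+1)| ≤ ∑ j ∈ Finset.range (k+1), |c j| := by
            have h3 : ∑ j ∈ Finset.range (k+3), |c j|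
                = (∑ i ∈ Finset.range (k+2), |c (i+1)|) + |c 0| := Finset.sum_range_succ' _ _
            have h4 : ∑ j ∈ Finset.range (k+3), |c j| = ∑ j ∈ Finset.range (k+1), |c j| := by
              rw [Finset.sum_range_succ, Finset.sum_range_succ, hc0 _ (by omega),
                hc0 _ (by omega)]
              simp
            nlinarith [abs_nonneg (c 0)]
          calc ∑ i ∈ Finset.range (k+2), ((i:ℝ)+1) * |c (i+1)|
              ≤ ∑ i ∈ Finset.range (k+2), (k:ℝ) * |c (i+1)| := h1
            _ = (k:ℝ) * ∑ i ∈ Finset.range (k+2), |c (i+1)| := by rw [Finset.mul_sum]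
            _ ≤ (k:ℝ) * ∑ j ∈ Finset.range (k+1), |c j| := by
                apply mul_le_mul_of_nonneg_left h2 (by positivity)
        have hB : ∑ i ∈ Finset.range (k+2), ((k:ℝ) + i) * |if i = 0 then 0 else c (i-1)|
            ≤ (2*(k:ℝ)+1) * ∑ j ∈ Finset.range (k+1), |c j| := by
          rw [Finset.sum_range_succ' (fun i => ((k:ℝ) + i) * |if i = 0 then 0 else c (i-1)|) (k+1)]
          simp only [if_neg (Nat.succ_ne_zero _), Nat.add_sub_cancel, Nat.cast_zero,
            if_pos rfl, if_true, abs_zero, mul_zero, add_zero]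
          rw [Finset.mul_sum]
          apply Finset.sum_le_sum
          intro i hi
          have hik : i ≤ k := by simpa using Nat.lt_succ_iff.1 (Finset.mem_range.1 hi)
          apply mul_le_mul_of_nonneg_right _ (abs_nonneg _)
          push_cast
          have : (i:ℝ) ≤ (k:ℝ) := by exact_mod_cast hik
          linarith
        calc ∑ i ∈ Finset.range (k+2),
              |((i:ℝ)+1) * c (i+1) - ((k:ℝ) + i) * (if i = 0 then 0 else c (i-1))|
            ≤ ∑ i ∈ Finset.range (k+2),
              (((i:ℝ)+1) * |c (i+1)| + ((k:ℝ) + i) * |if i = 0 then 0 else c (i-1)|) :=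
              Finset.sum_le_sum hstep
          _ = (∑ i ∈ Finset.range (k+2), ((i:ℝ)+1) * |c (i+1)|)
              + ∑ i ∈ Finset.range (k+2), ((k:ℝ) + i) * |if i = 0 then 0 else c (i-1)| :=
              Finset.sum_add_distrib
          _ ≤ (k:ℝ) * (∑ j ∈ Finset.range (k+1), |c j|)
              + (2*(k:ℝ)+1) * ∑ j ∈ Finset.range (k+1), |c j| := add_le_add hA hB
          _ = (3*(k:ℝ)+1) * ∑ j ∈ Finset.range (k+1), |c j| := by ring
          _ ≤ (3*(k:ℝ)+1) * (5 * k : ℝ) ^ k := by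
              apply mul_le_mul_of_nonneg_left hcS (by positivity)
          _ ≤ (5 * ((k:ℝ)+1)) * (5 * ((k:ℝ)+1)) ^ k := by
              apply mul_le_mul (by linarith) (pow_le_pow_left₀ (by positivity) (by linarith) k)
                (by positivity) (by positivity)
          _ = (5 * ((k:ℕ)+1 : ℕ) : ℝ) ^ (k+1) := by push_cast; ring
      · -- derivative representation
        intro x
        rw [iteratedDeriv_succ]
        have hfun : iteratedDeriv k f = fun y => ∑ j ∈ Finset.range (k+1), c j * gg k j y :=
          funext hrep
        rw [hfun]
        have hD : HasDerivAt (fun y => ∑ j ∈ Finset.range (k+1), c j * gg k j y)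
            (∑ j ∈ Finset.range (k+1),
              c j * ((j : ℝ) * gg (k + 1) (j - 1) x - ((k : ℝ) + j + 1) * gg (k + 1) (j + 1) x)) x := by
          apply HasDerivAt.fun_sum
          intro j _
          exact (hasDerivAt_gg k j x).const_mul (c j)
        rw [hD.deriv]
        -- now the sum identity
        have hsub : ∑ j ∈ Finset.range (k+1),
              c j * ((j : ℝ) * gg (k + 1) (j - 1) x - ((k : ℝ) + j + 1) * gg (k + 1) (j + 1) x)
            = (∑ j ∈ Finset.range (k+1), c j * ((j : ℝ) * gg (k + 1) (j - 1) x))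
              - ∑ j ∈ Finset.range (k+1), c j * (((k : ℝ) + j + 1) * gg (k + 1) (j + 1) x) := by
          rw [← Finset.sum_sub_distrib]
          apply Finset.sum_congr rfl
          intro j _; ring
        rw [hsub]
        have hA : ∑ j ∈ Finset.range (k+1), c j * ((j : ℝ) * gg (k + 1) (j - 1) x)
            = ∑ i ∈ Finset.range (k+2), ((i:ℝ)+1) * c (i+1) * gg (k+1) i x := by
          rw [Finset.sum_range_succ' (fun j => c j * ((j : ℝ) * gg (k + 1) (j - 1) x)) k]
          rw [Finset.sum_range_succ, Finset.sum_range_succ, hc0 (k+2) (by omega),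
            hc0 (k+1) (by omega)]
          simp only [Nat.cast_zero, zero_mul, mul_zero, add_zero]
          apply Finset.sum_congr rfl
          intro i _
          simp only [Nat.add_sub_cancel]
          push_cast; ring
        have hB : ∑ j ∈ Finset.range (k+1), c j * (((k : ℝ) + j + 1) * gg (k + 1) (j + 1) x)
            = ∑ i ∈ Finset.range (k+2),
              ((k:ℝ) + i) * (if i = 0 then 0 else c (i-1)) * gg (k+1) i x := by
          rw [Finset.sum_range_succ'
            (fun i => ((k:ℝ) + i) * (if i = 0 then 0 else c (i-1)) * gg (k+1) i x) (k+1)]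
          simp only [if_neg (Nat.succ_ne_zero _), Nat.add_sub_cancel, Nat.cast_zero,
            if_pos rfl, if_true, mul_zero, zero_mul, add_zero]
          apply Finset.sum_congr rfl
          intro j _
          push_cast; ring
        rw [hA, hB, ← Finset.sum_sub_distrib]
        apply Finset.sum_congr rfl
        intro i _
        ring

/-- For every `k ≥ 1`, the `k`-th derivative of `f(x) = (1 + x²)^{−1/2}`
satisfies `‖f^{(k)}‖_∞ ≤ (5k)^k`. -/
theorem stmt4 (k : ℕ) (hk : 1 ≤ k) (x : ℝ) :
    |iteratedDeriv k (fun x : ℝ => (Real.sqrt (1 + x ^ 2))⁻¹) x| ≤ (5 * k : ℝ) ^ k := by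
  obtain ⟨c, hc0, hcS, hrep⟩ := rep k
  rw [hrep x]
  calc |∑ j ∈ Finset.range (k+1), c j * gg k j x|
      ≤ ∑ j ∈ Finset.range (k+1), |c j * gg k j x| := Finset.abs_sum_le_sum_abs _ _
    _ ≤ ∑ j ∈ Finset.range (k+1), |c j| := by
        apply Finset.sum_le_sum
        intro j _
        rw [abs_mul]
        calc |c j| * |gg k j x| ≤ |c j| * 1 :=
              mul_le_mul_of_nonneg_left (gg_abs_le k j x) (abs_nonneg _)
          _ = |c j| := mul_one _
    _ ≤ (5 * k : ℝ) ^ k := hcS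
end

section
/- Let Γ = Γ₁ * Γ₂ be the free product of two finite groups of orders a+1 ≥ 4 and b+1 ≥ 3, with generating sets S_i = Γ_i \ {e} (complete-graph generators), and let P = λ(p₁ 1_{S₁} + p₂ 1_{S₂}) with p₁, p₂ > 0. Suppose the resolvent satisfies the product formula R^z(e,g) = R^z(e,e)·∏_{i=1}^k h_z(g_i) for g = g_k···g₁ reduced with alternating syllables, where h_z(g_i) = ζ₁^z or ζ₂^z according to the factor. Then for every z in the upper half-plane, |ζ₁^z ζ₂^z|² ≤ 1/(ab) < 1. -/
open Monoid.CoprodI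
open scoped ENNReal ComplexConjugate

section auxdefs

variable {G : Fin 2 → Type} [∀ i, Group (G i)]

/-- alternating list for a word of `n` syllable-pairs -/
def mkL : (n : ℕ) → (Fin n → ({s : G 0 // s ≠ 1} × {t : G 1 // t ≠ 1})) → List (Σ i, G i)
  | 0, _ => []
  | n+1, f => ⟨0, ((f 0).1 : G 0)⟩ :: ⟨1, ((f 0).2 : G 1)⟩ :: mkL n (f ∘ Fin.succ)

lemma mkL_length (n : ℕ) (f : Fin n → ({s : G 0 // s ≠ 1} × {t : G 1 // t ≠ 1})) :
    (mkL n f).length = 2 * n := by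
  induction n with
  | zero => rfl
  | succ n ih => simp [mkL, ih]; ring

lemma mkL_ne_one (n : ℕ) (f : Fin n → ({s : G 0 // s ≠ 1} × {t : G 1 // t ≠ 1})) :
    ∀ l ∈ mkL n f, Sigma.snd l ≠ 1 := by
  induction n with
  | zero => simp [mkL]
  | succ n ih =>
    intro l hl
    simp only [mkL, List.mem_cons] at hl
    rcases hl with rfl | rfl | hl
    · exact (f 0).1.2
    · exact (f 0).2.2
    · exact ih _ l hl

lemma mkL_head (n : ℕ) (f : Fin n → ({s : G 0 // s ≠ 1} × {t : G 1 // t ≠ 1})) :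
    ∀ l ∈ (mkL n f).head?, Sigma.fst l = 0 := by
  cases n with
  | zero => simp [mkL]
  | succ n => simp [mkL]

lemma mkL_chain (n : ℕ) (f : Fin n → ({s : G 0 // s ≠ 1} × {t : G 1 // t ≠ 1})) :
    (mkL n f).Chain' fun l l' => Sigma.fst l ≠ Sigma.fst l' := by
  induction n with
  | zero => simp [mkL, List.Chain']
  | succ n ih =>
    rw [mkL, List.Chain', List.isChain_cons, List.isChain_cons]
    refine ⟨by simp, ?_, ih _⟩
    intro y hy
    have := mkL_head n (f ∘ Fin.succ) y hy
    simp only [this]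
    decide

/-- the alternating reduced word -/
def mkW (n : ℕ) (f : Fin n → ({s : G 0 // s ≠ 1} × {t : G 1 // t ≠ 1})) : Word G :=
  ⟨mkL n f, mkL_ne_one n f, mkL_chain n f⟩

lemma mkL_inj : ∀ (n : ℕ) (f g : Fin n → ({s : G 0 // s ≠ 1} × {t : G 1 // t ≠ 1})),
    mkL n f = mkL n g → f = g := by
  intro n
  induction n with
  | zero => intro f g _; funext j; exact absurd j.2 (by omega)
  | succ n ih =>
    intro f g hL
    simp only [mkL, List.cons.injEq] at hL
    obtain ⟨h1, h2, h3⟩ := hL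
    have e1 : ((f 0).1 : G 0) = ((g 0).1 : G 0) := eq_of_heq (Sigma.mk.inj_iff.mp h1).2
    have e2 : ((f 0).2 : G 1) = ((g 0).2 : G 1) := eq_of_heq (Sigma.mk.inj_iff.mp h2).2
    have etail := ih (f ∘ Fin.succ) (g ∘ Fin.succ) h3
    funext j
    induction j using Fin.cases with
    | zero => exact Prod.ext (Subtype.ext e1) (Subtype.ext e2)
    | succ j => exact congrFun etail j

lemma mkW_inj [∀ i, DecidableEq (G i)] {n m : ℕ} {f : Fin n → ({s : G 0 // s ≠ 1} × {t : G 1 // t ≠ 1})}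
    {g : Fin m → ({s : G 0 // s ≠ 1} × {t : G 1 // t ≠ 1})}
    (h : (mkW n f).prod = (mkW m g).prod) : n = m ∧ HEq f g := by
  have hinj : Function.Injective (Word.prod (M := G)) := by
    have : Word.prod (M := G) = ⇑(Monoid.CoprodI.Word.equiv (M := G)).symm := rfl
    rw [this]; exact (Monoid.CoprodI.Word.equiv).symm.injective
  have hW : mkW n f = mkW m g := hinj h
  have hL : mkL n f = mkL m g := congrArg Word.toList hW
  have hnm : n = m := by
    have := congrArg List.length hL
    rw [mkL_length, mkL_length] at this; omega
  subst hnm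
  exact ⟨rfl, heq_of_eq (mkL_inj n f g hL)⟩

end auxdefs

section valprod

variable {G : Fin 2 → Type} [∀ i, Group (G i)]

lemma list_prod_get {α M : Type*} [CommMonoid M] (l : List α) (h : α → M) :
    ∏ j : Fin l.length, h (l.get j) = (l.map h).prod := by
  conv_rhs => rw [← List.ofFn_get l]
  rw [List.map_ofFn, List.prod_ofFn]
  rfl

lemma mkL_map_if (ζ₁ ζ₂ : ℂ) (n : ℕ)
    (f : Fin n → ({s : G 0 // s ≠ 1} × {t : G 1 // t ≠ 1})) :
    ((mkL n f).map (fun l : Σ i, G i => if l.1 = 0 then ζ₁ else ζ₂)).prod = (ζ₁ * ζ₂) ^ n := by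
  induction n with
  | zero => simp [mkL]
  | succ n ih =>
    simp only [mkL, List.map_cons, List.prod_cons, ih (f ∘ Fin.succ)]
    norm_num [pow_succ]
    ring

lemma mkW_prod_eq (n : ℕ) (f : Fin n → ({s : G 0 // s ≠ 1} × {t : G 1 // t ≠ 1})) :
    (List.ofFn fun j : Fin (mkL n f (G := G)).length =>
        Monoid.CoprodI.of (((mkL n f).get j).2)).prod = (mkW n f).prod := by
  show _ = ((mkL n f).map fun l => Monoid.CoprodI.of l.snd).prod
  conv_rhs => rw [← List.ofFn_get (mkL n f), List.map_ofFn]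
  rfl

end valprod

section l2b

lemma l2bound {ι : Type} [DecidableEq ι] (R : lp (fun _ : ι => ℂ) 2 →L[ℂ] lp (fun _ : ι => ℂ) 2)
    (e : ι) (F : Finset ι) :
    ∑ g ∈ F, ‖(inner ℂ (lp.single 2 e (1 : ℂ)) (R (lp.single 2 g (1 : ℂ))) : ℂ)‖ ^ 2 ≤ ‖R‖ ^ 2 := by
  classical
  set t : ι → ℂ := fun g => (inner ℂ (lp.single 2 e (1 : ℂ)) (R (lp.single 2 g (1 : ℂ))) : ℂ)
    with ht
  set u : lp (fun _ : ι => ℂ) 2 := ∑ g ∈ F, lp.single 2 g ((starRingEnd ℂ) (t g)) with hu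
  have hpt : (0:ℝ) < (2 : ℝ≥0∞).toReal := by norm_num
  have hu2 : ‖u‖ ^ 2 = ∑ g ∈ F, ‖t g‖ ^ 2 := by
    have h := lp.norm_sum_single hpt (fun g => (starRingEnd ℂ) (t g)) F
    have h2 : (2 : ℝ≥0∞).toReal = ((2:ℕ):ℝ) := by norm_num
    rw [h2] at h
    simp only [Real.rpow_natCast] at h
    simpa using h
  have hsingle : ∀ g : ι, lp.single 2 g ((starRingEnd ℂ) (t g)) =
      ((starRingEnd ℂ) (t g)) • (lp.single 2 g (1 : ℂ) : lp (fun _ : ι => ℂ) 2) := by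
    intro g
    have h := lp.single_smul (E := fun _ : ι => ℂ) (𝕜 := ℂ) 2 g ((starRingEnd ℂ) (t g)) (1:ℂ)
    simpa using h
  have hiRu : (inner ℂ (lp.single 2 e (1 : ℂ)) (R u) : ℂ) = ((∑ g ∈ F, ‖t g‖ ^ 2 : ℝ) : ℂ) := by
    rw [hu, map_sum, inner_sum]
    push_cast
    refine Finset.sum_congr rfl fun g _ => ?_
    rw [hsingle g, map_smul, inner_smul_right]
    exact RCLike.conj_mul (t g)
  have hne : ‖(lp.single 2 e (1:ℂ) : lp (fun _ : ι => ℂ) 2)‖ = 1 := by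
    have h := lp.norm_single (E := fun _ : ι => ℂ) (by norm_num : (0 : ℝ≥0∞) < 2) e (1:ℂ)
    simpa using h
  have hS0 : (0:ℝ) ≤ ∑ g ∈ F, ‖t g‖ ^ 2 :=
    Finset.sum_nonneg fun g _ => sq_nonneg _
  have hbound : ∑ g ∈ F, ‖t g‖ ^ 2 ≤ ‖R‖ * ‖u‖ := by
    have h1 : ∑ g ∈ F, ‖t g‖ ^ 2 = ‖(inner ℂ (lp.single 2 e (1 : ℂ)) (R u) : ℂ)‖ := by
      rw [hiRu, Complex.norm_real, Real.norm_eq_abs, abs_of_nonneg hS0]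
    have h2 : ‖(inner ℂ (lp.single 2 e (1 : ℂ)) (R u) : ℂ)‖ ≤
        ‖(lp.single 2 e (1:ℂ) : lp (fun _ : ι => ℂ) 2)‖ * ‖R u‖ := norm_inner_le_norm _ _
    rw [hne, one_mul] at h2
    exact h1 ▸ le_trans h2 (R.le_opNorm u)
  rw [← hu2] at hbound ⊢
  nlinarith [norm_nonneg u, norm_nonneg R, sq_nonneg (‖u‖ - ‖R‖)]

end l2b

set_option maxHeartbeats 1000000 in
/-- Let `Γ = Γ₁ * Γ₂` be the free product of two finite groups of orders
`a+1 ≥ 4` and `b+1 ≥ 3`, with complete-graph generating sets `S_i = Γ_i \ {e}`, and let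
`P = λ(p₁·1_{S₁} + p₂·1_{S₂})` with `p₁, p₂ > 0`. If the resolvent satisfies the product
formula `R^z(e,g) = R^z(e,e)·∏ h_z(g_i)` over reduced alternating words, with
`h_z = ζ₁` or `ζ₂` according to the factor, then `|ζ₁ ζ₂|² ≤ 1/(ab) < 1`. -/
theorem stmt17 (G : Fin 2 → Type) [∀ i, Group (G i)] [∀ i, Fintype (G i)]
    [∀ i, DecidableEq (G i)]
    (a b : ℕ) (hcard0 : Fintype.card (G 0) = a + 1) (hcard1 : Fintype.card (G 1) = b + 1)
    (ha : 3 ≤ a) (hb : 2 ≤ b)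
    (p₁ p₂ : ℝ) (hp₁ : 0 < p₁) (hp₂ : 0 < p₂)
    (p : Monoid.CoprodI G →₀ ℂ)
    (hp : p = (∑ s ∈ Finset.univ.erase (1 : G 0),
        Finsupp.single (Monoid.CoprodI.of s) ((p₁ : ℂ))) +
      ∑ s ∈ Finset.univ.erase (1 : G 1),
        Finsupp.single (Monoid.CoprodI.of s) ((p₂ : ℂ)))
    (lamOp : (Monoid.CoprodI G →₀ ℂ) →
      (lp (fun _ : Monoid.CoprodI G => ℂ) 2 →L[ℂ] lp (fun _ : Monoid.CoprodI G => ℂ) 2))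
    (hlamOp : ∀ (q : Monoid.CoprodI G →₀ ℂ) (v : Monoid.CoprodI G),
      lamOp q (lp.single 2 v (1 : ℂ)) = q.sum fun g c => c • lp.single 2 (g * v) (1 : ℂ))
    (z : ℂ) (hz : 0 < z.im)
    (R : lp (fun _ : Monoid.CoprodI G => ℂ) 2 →L[ℂ] lp (fun _ : Monoid.CoprodI G => ℂ) 2)
    (hR₁ : R.comp (lamOp p - z • 1) = 1) (hR₂ : (lamOp p - z • 1).comp R = 1)
    (ent : Monoid.CoprodI G → Monoid.CoprodI G → ℂ)
    (hent : ∀ u v : Monoid.CoprodI G, ent u v =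
      (inner ℂ (lp.single 2 u (1 : ℂ)) (R (lp.single 2 v (1 : ℂ))) : ℂ))
    (ζ₁ ζ₂ : ℂ)
    (hζ₁ : ∀ s : G 0, s ≠ 1 → ent 1 (Monoid.CoprodI.of s) = ent 1 1 * ζ₁)
    (hζ₂ : ∀ s : G 1, s ≠ 1 → ent 1 (Monoid.CoprodI.of s) = ent 1 1 * ζ₂)
    (hprod : ∀ (k : ℕ) (idx : Fin k → Fin 2) (x : ∀ j : Fin k, G (idx j)),
      (∀ j, x j ≠ 1) →
      (∀ (j : Fin k) (hj : (j : ℕ) + 1 < k), idx ⟨(j : ℕ) + 1, hj⟩ ≠ idx j) →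
      ent 1 ((List.ofFn fun j : Fin k => Monoid.CoprodI.of (x j)).prod) =
        ent 1 1 * ∏ j : Fin k, (if idx j = 0 then ζ₁ else ζ₂)) :
    ‖ζ₁ * ζ₂‖ ^ 2 ≤ 1 / (a * b : ℝ) ∧ 1 / (a * b : ℝ) < 1 := by
  classical
  set c := ent 1 1 with hcdef
  -- Step 1 : c ≠ 0
  have happ : R ((lamOp p - z • 1) (lp.single 2 (1 : Monoid.CoprodI G) (1:ℂ))) = lp.single 2 (1 : Monoid.CoprodI G) (1:ℂ) := by
    have h := ContinuousLinearMap.ext_iff.mp hR₁ (lp.single 2 (1 : Monoid.CoprodI G) (1:ℂ))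
    simpa using h
  have hz0 : ∀ g : Monoid.CoprodI G, (fun (g : Monoid.CoprodI G) (cc : ℂ) => cc • (lp.single 2 (g * 1) (1:ℂ) :
      lp (fun _ : Monoid.CoprodI G => ℂ) 2)) g 0 = 0 := fun g => zero_smul ℂ _
  have hadd : ∀ (g : Monoid.CoprodI G) (b₁ b₂ : ℂ), (fun (g : Monoid.CoprodI G) (cc : ℂ) => cc • (lp.single 2 (g * 1) (1:ℂ) :
      lp (fun _ : Monoid.CoprodI G => ℂ) 2)) g (b₁ + b₂) = _ := fun g b₁ b₂ => add_smul b₁ b₂ _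
  have hPδ : lamOp p (lp.single 2 (1 : Monoid.CoprodI G) (1:ℂ)) =
      (∑ s ∈ Finset.univ.erase (1 : G 0),
        (p₁:ℂ) • (lp.single 2 (Monoid.CoprodI.of s : Monoid.CoprodI G) (1:ℂ) : lp (fun _ : Monoid.CoprodI G => ℂ) 2)) +
      ∑ s ∈ Finset.univ.erase (1 : G 1),
        (p₂:ℂ) • (lp.single 2 (Monoid.CoprodI.of s : Monoid.CoprodI G) (1:ℂ) : lp (fun _ : Monoid.CoprodI G => ℂ) 2) := by
    rw [hlamOp, hp]
    rw [Finsupp.sum_add_index' hz0 hadd, ← Finsupp.sum_finset_sum_index hz0 hadd,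
      ← Finsupp.sum_finset_sum_index hz0 hadd]
    refine congrArg₂ (· + ·) (Finset.sum_congr rfl fun s _ => ?_)
      (Finset.sum_congr rfl fun s _ => ?_) <;>
    · rw [Finsupp.sum_single_index (hz0 _)]
      simp
  have hone : (inner ℂ (lp.single 2 (1 : Monoid.CoprodI G) (1:ℂ) : lp (fun _ : Monoid.CoprodI G => ℂ) 2) (lp.single 2 (1 : Monoid.CoprodI G) (1:ℂ)) : ℂ) = 1 := by
    rw [lp.inner_single_left]
    simp [lp.single_apply_self]
  have hkey : ((∑ s ∈ Finset.univ.erase (1 : G 0), (p₁:ℂ) * ent 1 (Monoid.CoprodI.of s)) +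
      ∑ s ∈ Finset.univ.erase (1 : G 1), (p₂:ℂ) * ent 1 (Monoid.CoprodI.of s)) - z * c = 1 := by
    have h := congrArg (fun v => (inner ℂ (lp.single 2 (1 : Monoid.CoprodI G) (1:ℂ) : lp (fun _ : Monoid.CoprodI G => ℂ) 2) v : ℂ)) happ
    simp only at h
    rw [ContinuousLinearMap.sub_apply, ContinuousLinearMap.smul_apply,
      ContinuousLinearMap.one_apply, map_sub, map_smul, inner_sub_right, inner_smul_right,
      hPδ, map_add, map_sum, map_sum, inner_add_right, inner_sum, inner_sum, hone] at h
    simp only [map_smul, inner_smul_right] at h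
    rw [← h]
    congr 1
    · congr 1 <;> exact Finset.sum_congr rfl fun s _ => by rw [hent 1 (Monoid.CoprodI.of s)]
    · rw [hcdef, hent 1 1]
  have hc : c ≠ 0 := by
    intro h0
    rw [h0] at hkey
    have e0 : ∀ s ∈ Finset.univ.erase (1 : G 0), (p₁:ℂ) * ent 1 (Monoid.CoprodI.of s) = 0 := by
      intro s hs
      rw [hζ₁ s (Finset.mem_erase.mp hs).1, h0, zero_mul, mul_zero]
    have e1 : ∀ s ∈ Finset.univ.erase (1 : G 1), (p₂:ℂ) * ent 1 (Monoid.CoprodI.of s) = 0 := by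
      intro s hs
      rw [hζ₂ s (Finset.mem_erase.mp hs).1, h0, zero_mul, mul_zero]
    rw [Finset.sum_congr rfl e0, Finset.sum_congr rfl e1] at hkey
    simp at hkey
  -- Step 2 : values on alternating words
  have hval : ∀ (n : ℕ) (f : Fin n → ({s : G 0 // s ≠ 1} × {t : G 1 // t ≠ 1})),
      ent 1 ((mkW n f).prod) = c * (ζ₁ * ζ₂) ^ n := by
    intro n f
    have hne : ∀ j : Fin (mkL n f (G := G)).length, ((mkL n f).get j).2 ≠ 1 :=
      fun j => mkL_ne_one n f _ (List.get_mem _ j)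
    have hadj : ∀ (j : Fin (mkL n f (G := G)).length) (hj : (j : ℕ) + 1 < (mkL n f (G := G)).length),
        ((mkL n f).get ⟨(j : ℕ) + 1, hj⟩).1 ≠ ((mkL n f).get j).1 := by
      intro j hj
      have hch := List.isChain_iff_getElem.mp (mkL_chain n f) j (by omega)
      exact Ne.symm hch
    have h := hprod (mkL n f (G := G)).length (fun j => ((mkL n f).get j).1)
      (fun j => ((mkL n f).get j).2) hne hadj
    rw [mkW_prod_eq] at h
    rw [h]
    congr 1
    rw [list_prod_get (mkL n f) (fun l => if l.1 = 0 then ζ₁ else ζ₂)]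
    exact mkL_map_if ζ₁ ζ₂ n f
  -- Step 3 : counting
  have hcardS : Fintype.card ({s : G 0 // s ≠ 1} × {t : G 1 // t ≠ 1}) = a * b := by
    rw [Fintype.card_prod]
    have h0 : Fintype.card {s : G 0 // s ≠ 1} = a := by
      rw [Fintype.card_subtype_compl, hcard0, Fintype.card_subtype_eq]
      omega
    have h1 : Fintype.card {t : G 1 // t ≠ 1} = b := by
      rw [Fintype.card_subtype_compl, hcard1, Fintype.card_subtype_eq]
      omega
    rw [h0, h1]
  -- Step 4 : the ℓ² bound gives the series bound
  have hsum : ∀ N : ℕ, ∑ n ∈ Finset.range (N+1),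
      ((a*b : ℝ)^n * (‖c‖^2 * (‖ζ₁*ζ₂‖^2)^n)) ≤ ‖R‖^2 := by
    intro N
    set FN : Finset (Monoid.CoprodI G) := (Finset.range (N+1)).biUnion
      (fun n => Finset.image
        (fun f : Fin n → ({s : G 0 // s ≠ 1} × {t : G 1 // t ≠ 1}) => (mkW n f).prod)
        Finset.univ) with hFN
    have hb := l2bound R (1 : Monoid.CoprodI G) FN
    simp only [← hent] at hb
    have hdisj : (↑(Finset.range (N+1)) : Set ℕ).PairwiseDisjoint
        (fun n => Finset.image
          (fun f : Fin n → ({s : G 0 // s ≠ 1} × {t : G 1 // t ≠ 1}) => (mkW n f).prod)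
          Finset.univ) := by
      intro n _ m _ hnm
      refine Finset.disjoint_left.mpr ?_
      rintro g hgn hgm
      obtain ⟨f, _, rfl⟩ := Finset.mem_image.mp hgn
      obtain ⟨f', _, he⟩ := Finset.mem_image.mp hgm
      exact hnm (mkW_inj he.symm).1
    rw [hFN, Finset.sum_biUnion hdisj] at hb
    have heval : ∀ n ∈ Finset.range (N+1),
        (∑ g ∈ Finset.image
          (fun f : Fin n → ({s : G 0 // s ≠ 1} × {t : G 1 // t ≠ 1}) => (mkW n f).prod)
          Finset.univ, ‖ent 1 g‖^2) = (a*b : ℝ)^n * (‖c‖^2 * (‖ζ₁*ζ₂‖^2)^n) := by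
      intro n _
      rw [Finset.sum_image (fun f _ f' _ he => eq_of_heq (mkW_inj he).2)]
      have hterm : ∀ f : Fin n → ({s : G 0 // s ≠ 1} × {t : G 1 // t ≠ 1}),
          ‖ent 1 ((mkW n f).prod)‖^2 = ‖c‖^2 * (‖ζ₁*ζ₂‖^2)^n := by
        intro f
        rw [hval n f, norm_mul, norm_pow]
        ring
      rw [Finset.sum_congr rfl fun f _ => hterm f, Finset.sum_const, Finset.card_univ,
        Fintype.card_fun, hcardS, nsmul_eq_mul]
      push_cast
      simp only [Fintype.card_fin]
      try ring
    rw [Finset.sum_congr rfl heval] at hb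
    exact hb
  -- Step 5 : conclude q ≤ 1
  have hcpos : (0:ℝ) < ‖c‖^2 := pow_pos (norm_pos_iff.mpr hc) 2
  have hq : (a*b:ℝ) * ‖ζ₁*ζ₂‖^2 ≤ 1 := by
    by_contra hq1
    push_neg at hq1
    obtain ⟨N, hN⟩ := exists_nat_gt (‖R‖^2 / ‖c‖^2)
    have hterm : ∀ n ∈ Finset.range (N+1),
        ‖c‖^2 ≤ (a*b : ℝ)^n * (‖c‖^2 * (‖ζ₁*ζ₂‖^2)^n) := by
      intro n _
      have h1 : (1:ℝ) ≤ ((a*b:ℝ) * ‖ζ₁*ζ₂‖^2)^n := one_le_pow₀ hq1.le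
      calc ‖c‖^2 = ‖c‖^2 * 1 := by ring
        _ ≤ ‖c‖^2 * ((a*b:ℝ) * ‖ζ₁*ζ₂‖^2)^n :=
            mul_le_mul_of_nonneg_left h1 (sq_nonneg _)
        _ = (a*b : ℝ)^n * (‖c‖^2 * (‖ζ₁*ζ₂‖^2)^n) := by rw [mul_pow]; ring
    have hge : (N+1 : ℝ) * ‖c‖^2 ≤ ‖R‖^2 := by
      calc (N+1 : ℝ) * ‖c‖^2 = ∑ _n ∈ Finset.range (N+1), ‖c‖^2 := by
            rw [Finset.sum_const, Finset.card_range, nsmul_eq_mul]; push_cast; ring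
        _ ≤ ∑ n ∈ Finset.range (N+1), ((a*b : ℝ)^n * (‖c‖^2 * (‖ζ₁*ζ₂‖^2)^n)) :=
            Finset.sum_le_sum hterm
        _ ≤ ‖R‖^2 := hsum N
    rw [div_lt_iff₀ hcpos] at hN
    have : (N:ℝ) < N + 1 := by linarith
    nlinarith
  have hab : (1:ℝ) < (a*b : ℝ) := by
    have : (6:ℕ) ≤ a * b := Nat.mul_le_mul ha hb
    have : (6:ℝ) ≤ (a*b : ℕ) := by exact_mod_cast this
    push_cast at this
    linarith
  constructor
  · rw [le_div_iff₀ (by linarith : (0:ℝ) < (a*b:ℝ))]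
    calc ‖ζ₁ * ζ₂‖^2 * (a*b:ℝ) = (a*b:ℝ) * ‖ζ₁*ζ₂‖^2 := by ring
      _ ≤ 1 := hq
  · rw [div_lt_one (by linarith : (0:ℝ) < (a*b:ℝ))]
    exact hab
end
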